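/- Fix a real s > 3/2, and let L(A;s) = Σ'_{i,j,k∈ℤ} g(A;i,j,k)^{-s}. Then the second partial derivative of L(A;s) with respect to A, evaluated at A = 1/2, is strictly positive. -/

import Mathlib

/-- The quadratic form `g(A;i,j,k) = (A(i+j)² + (j+k)² + (i+k)²)/(A+1)`. -/
noncomputable def cuboidalG (A : ℝ) (p : ℤ × ℤ × ℤ) : ℝ :=
  (A * ((p.1 : ℝ) + (p.2.1 : ℝ))^2 + ((p.2.1 : ℝ) + (p.2.2 : ℝ))^2 +
    ((p.1 : ℝ) + (p.2.2 : ℝ))^2) / (A + 1)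

/-- The Epstein zeta function `L(A;s) = Σ'_{(i,j,k)≠(0,0,0)} g(A;i,j,k)^{-s}`. -/
noncomputable def epsteinL (A s : ℝ) : ℝ :=
  ∑' p : {p : ℤ × ℤ × ℤ // p ≠ 0}, (cuboidalG A p.1) ^ (-s)

open Real Set

namespace EpsteinAux

/-- The discriminant-like quantity `d(p) = (i+j)² − (j+k)² − (i+k)²`. -/
noncomputable def dd (p : ℤ × ℤ × ℤ) : ℝ :=
  ((p.1 : ℝ) + (p.2.1 : ℝ))^2 - ((p.2.1 : ℝ) + (p.2.2 : ℝ))^2 - ((p.1 : ℝ) + (p.2.2 : ℝ))^2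

/-- `N(p) = i² + j² + k²` as a real number. -/
noncomputable def NN (p : ℤ × ℤ × ℤ) : ℝ :=
  (p.1 : ℝ)^2 + (p.2.1 : ℝ)^2 + (p.2.2 : ℝ)^2

/-- The order-3 symmetry of the bcc form. -/
def sigma3 (p : ℤ × ℤ × ℤ) : ℤ × ℤ × ℤ := (-p.1 - p.2.2, p.2.1 + p.2.2, p.1)

/-- The first derivative (in `A`) of `A ↦ (cuboidalG A p)^(-s)`. -/
noncomputable def FF1 (s : ℝ) (p : ℤ × ℤ × ℤ) (A : ℝ) : ℝ :=
  -s * dd p * cuboidalG A p ^ (-s - 1) / (A + 1) ^ 2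

/-- The second derivative (in `A`) of `A ↦ (cuboidalG A p)^(-s)`. -/
noncomputable def FF2 (s : ℝ) (p : ℤ × ℤ × ℤ) (A : ℝ) : ℝ :=
  s * (s + 1) * dd p ^ 2 * cuboidalG A p ^ (-s - 2) / (A + 1) ^ 4 +
    2 * s * dd p * cuboidalG A p ^ (-s - 1) / (A + 1) ^ 3

lemma NN_nonneg (p : ℤ × ℤ × ℤ) : 0 ≤ NN p := by
  unfold NN; positivity

lemma NN_ge_one {p : ℤ × ℤ × ℤ} (hp : p ≠ 0) : 1 ≤ NN p := by
  obtain ⟨i, j, k⟩ := p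
  have h : i ≠ 0 ∨ j ≠ 0 ∨ k ≠ 0 := by
    by_contra h
    push_neg at h
    exact hp (by simp [Prod.ext_iff, h.1, h.2.1, h.2.2])
  have hZ : (1 : ℤ) ≤ i ^ 2 + j ^ 2 + k ^ 2 := by
    rcases h with h | h | h
    · rcases lt_or_gt_of_ne h with h' | h' <;> nlinarith [sq_nonneg j, sq_nonneg k]
    · rcases lt_or_gt_of_ne h with h' | h' <;> nlinarith [sq_nonneg i, sq_nonneg k]
    · rcases lt_or_gt_of_ne h with h' | h' <;> nlinarith [sq_nonneg i, sq_nonneg j]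
  have : ((1 : ℤ) : ℝ) ≤ ((i ^ 2 + j ^ 2 + k ^ 2 : ℤ) : ℝ) := by exact_mod_cast hZ
  unfold NN
  push_cast at this ⊢
  linarith

lemma absSum_ge_one {p : ℤ × ℤ × ℤ} (hp : p ≠ 0) :
    1 ≤ |(p.1 : ℝ)| + |(p.2.1 : ℝ)| + |(p.2.2 : ℝ)| := by
  obtain ⟨i, j, k⟩ := p
  have h : i ≠ 0 ∨ j ≠ 0 ∨ k ≠ 0 := by
    by_contra h
    push_neg at h
    exact hp (by simp [Prod.ext_iff, h.1, h.2.1, h.2.2])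
  have hi : (0:ℝ) ≤ |(i : ℝ)| := abs_nonneg _
  have hj : (0:ℝ) ≤ |(j : ℝ)| := abs_nonneg _
  have hk : (0:ℝ) ≤ |(k : ℝ)| := abs_nonneg _
  rcases h with h | h | h
  · have : (1:ℝ) ≤ |(i : ℝ)| := by
      have := Int.one_le_abs h
      calc (1:ℝ) ≤ ((|i| : ℤ) : ℝ) := by exact_mod_cast this
        _ = |(i : ℝ)| := by push_cast; ring
    simp only []
    linarith
  · have : (1:ℝ) ≤ |(j : ℝ)| := by
      have := Int.one_le_abs h
      calc (1:ℝ) ≤ ((|j| : ℤ) : ℝ) := by exact_mod_cast this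
        _ = |(j : ℝ)| := by push_cast; ring
    simp only []
    linarith
  · have : (1:ℝ) ≤ |(k : ℝ)| := by
      have := Int.one_le_abs h
      calc (1:ℝ) ≤ ((|k| : ℤ) : ℝ) := by exact_mod_cast this
        _ = |(k : ℝ)| := by push_cast; ring
    simp only []
    linarith

lemma cuboidalG_lb {p : ℤ × ℤ × ℤ} (hp : p ≠ 0) {A : ℝ} (hA : A ∈ Set.Ioo (1/4 : ℝ) (3/4)) :
    NN p / 7 ≤ cuboidalG A p := by
  obtain ⟨h1, h2⟩ := hA
  have hA1 : (0:ℝ) < A + 1 := by linarith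
  unfold cuboidalG NN
  rw [div_le_div_iff₀ (by norm_num) hA1]
  set x := (p.1 : ℝ); set y := (p.2.1 : ℝ); set z := (p.2.2 : ℝ)
  nlinarith [sq_nonneg (x + y + z), sq_nonneg (x + y), sq_nonneg (y + z), sq_nonneg (x + z),
    mul_nonneg (by linarith : (0:ℝ) ≤ A - 1/4) (sq_nonneg (x + y)),
    mul_nonneg (by linarith : (0:ℝ) ≤ 3/4 - A)
      (by positivity : (0:ℝ) ≤ x ^ 2 + y ^ 2 + z ^ 2)]

lemma cuboidalG_pos {p : ℤ × ℤ × ℤ} (hp : p ≠ 0) {A : ℝ} (hA : A ∈ Set.Ioo (1/4 : ℝ) (3/4)) :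
    0 < cuboidalG A p :=
  lt_of_lt_of_le (by nlinarith [NN_ge_one hp] : (0:ℝ) < NN p / 7) (cuboidalG_lb hp hA)

lemma cuboidalG_rpow_le {p : ℤ × ℤ × ℤ} (hp : p ≠ 0) {A : ℝ}
    (hA : A ∈ Set.Ioo (1/4 : ℝ) (3/4)) {r : ℝ} (hr : 0 ≤ r) :
    cuboidalG A p ^ (-r) ≤ 7 ^ r * NN p ^ (-r) := by
  have hN : (0:ℝ) < NN p := lt_of_lt_of_le one_pos (NN_ge_one hp)
  have h1 : (0:ℝ) < NN p / 7 := by positivity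
  have h2 := Real.rpow_le_rpow_of_nonpos h1 (cuboidalG_lb hp hA) (neg_nonpos.mpr hr)
  refine h2.trans_eq ?_
  rw [Real.div_rpow hN.le (by norm_num : (0:ℝ) ≤ 7),
    Real.rpow_neg (by norm_num : (0:ℝ) ≤ 7), div_eq_mul_inv, inv_inv, mul_comm]

lemma dd_abs_le (p : ℤ × ℤ × ℤ) : |dd p| ≤ 4 * NN p := by
  unfold dd NN
  set x := (p.1 : ℝ); set y := (p.2.1 : ℝ); set z := (p.2.2 : ℝ)
  rw [abs_le]
  constructor
  · nlinarith [sq_nonneg (x - y), sq_nonneg (y - z), sq_nonneg (x - z), sq_nonneg x,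
      sq_nonneg y, sq_nonneg z, sq_nonneg (x + y)]
  · nlinarith [sq_nonneg (x - y), sq_nonneg (y + z), sq_nonneg (x + z), sq_nonneg x,
      sq_nonneg y, sq_nonneg z, sq_nonneg (x + y)]

lemma summable_w {b : ℝ} (hb : 1 < b) :
    Summable (fun n : ℤ => ((1 : ℝ) + |(n : ℝ)|) ^ (-b)) := by
  have h0 : Summable (fun n : ℤ => |(n : ℝ)| ^ (-b) + if n = 0 then (1:ℝ) else 0) := by
    refine (Real.summable_abs_int_rpow hb).add ?_
    refine summable_of_ne_finset_zero (s := {(0:ℤ)}) ?_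
    intro n hn
    simp only [Finset.mem_singleton] at hn
    simp [hn]
  refine Summable.of_nonneg_of_le (fun n => by positivity) (fun n => ?_) h0
  by_cases hn : n = 0
  · subst hn
    simp [Real.zero_rpow (by linarith : -b ≠ 0), Real.one_rpow]
  · have h1 : (1:ℝ) ≤ |(n : ℝ)| := by
      have := Int.one_le_abs hn
      calc (1:ℝ) ≤ ((|n| : ℤ) : ℝ) := by exact_mod_cast this
        _ = |(n : ℝ)| := by push_cast; ring
    have := Real.rpow_le_rpow_of_nonpos (by linarith : (0:ℝ) < |(n:ℝ)|)
      (by linarith : |(n:ℝ)| ≤ 1 + |(n:ℝ)|) (by linarith : -b ≤ 0)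
    simp [hn]
    linarith

lemma NN_rpow_le {p : ℤ × ℤ × ℤ} (hp : p ≠ 0) {s : ℝ} (hs : 3/2 < s) :
    NN p ^ (-s) ≤ 12 ^ s * (((1 : ℝ) + |(p.1 : ℝ)|) ^ (-(2*s/3)) *
      (((1 : ℝ) + |(p.2.1 : ℝ)|) ^ (-(2*s/3)) * ((1 : ℝ) + |(p.2.2 : ℝ)|) ^ (-(2*s/3)))) := by
  set x := (1 : ℝ) + |(p.1 : ℝ)| with hxdef
  set y := (1 : ℝ) + |(p.2.1 : ℝ)| with hydef
  set z := (1 : ℝ) + |(p.2.2 : ℝ)| with hzdef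
  set T := |(p.1 : ℝ)| + |(p.2.1 : ℝ)| + |(p.2.2 : ℝ)| with hTdef
  have hT1 : 1 ≤ T := absSum_ge_one hp
  have hN : (0:ℝ) < NN p := lt_of_lt_of_le one_pos (NN_ge_one hp)
  have hx : (0:ℝ) < x := by positivity
  have hy : (0:ℝ) < y := by positivity
  have hz : (0:ℝ) < z := by positivity
  have hT2 : T ^ 2 ≤ 3 * NN p := by
    unfold T
    unfold NN
    nlinarith [sq_nonneg (|(p.1:ℝ)| - |(p.2.1:ℝ)|), sq_nonneg (|(p.2.1:ℝ)| - |(p.2.2:ℝ)|),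
      sq_nonneg (|(p.1:ℝ)| - |(p.2.2:ℝ)|), sq_abs (p.1:ℝ), sq_abs (p.2.1:ℝ), sq_abs (p.2.2:ℝ)]
  have hxyz1 : x * y * z ≤ 8 * T ^ 3 := by
    have hx' : x ≤ 2 * T := by unfold x T; have := abs_nonneg (p.2.1:ℝ); have := abs_nonneg (p.2.2:ℝ); linarith
    have hy' : y ≤ 2 * T := by unfold y T; have := abs_nonneg (p.1:ℝ); have := abs_nonneg (p.2.2:ℝ); linarith
    have hz' : z ≤ 2 * T := by unfold z T; have := abs_nonneg (p.1:ℝ); have := abs_nonneg (p.2.1:ℝ); linarith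
    calc x * y * z ≤ (2*T) * (2*T) * (2*T) := by
          apply mul_le_mul (mul_le_mul hx' hy' hy.le (by linarith)) hz' hz.le (by positivity)
      _ = 8 * T ^ 3 := by ring
  have hxyz : x * y * z ≤ (12 * NN p) ^ ((3:ℝ)/2) := by
    have hbase : (0:ℝ) < 12 * NN p := by linarith
    refine le_of_pow_le_pow_left₀ (two_ne_zero) (by positivity) ?_
    have hsq : ((12 * NN p) ^ ((3:ℝ)/2)) ^ 2 = (12 * NN p) ^ (3:ℕ) := by
      rw [← Real.rpow_natCast ((12 * NN p) ^ ((3:ℝ)/2)) 2, ← Real.rpow_mul hbase.le]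
      norm_num
    rw [hsq]
    have h3 : (T ^ 2) ^ 3 ≤ (3 * NN p) ^ 3 := pow_le_pow_left₀ (sq_nonneg T) hT2 3
    calc (x * y * z) ^ 2 ≤ (8 * T ^ 3) ^ 2 := pow_le_pow_left₀ (by positivity) hxyz1 2
      _ = 64 * (T ^ 2) ^ 3 := by ring
      _ ≤ 64 * (3 * NN p) ^ 3 := by linarith
      _ = (12 * NN p) ^ (3:ℕ) := by ring
  have hb0 : (0:ℝ) ≤ 2*s/3 := by linarith
  have key : (12 * NN p) ^ (-s) ≤ (x * y * z) ^ (-(2*s/3)) := by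
    have h := Real.rpow_le_rpow_of_nonpos (by positivity : (0:ℝ) < x * y * z) hxyz
      (by linarith : -(2*s/3) ≤ 0)
    refine le_trans (le_of_eq ?_) h
    rw [← Real.rpow_mul (by positivity : (0:ℝ) ≤ 12 * NN p)]
    congr 1
    ring
  have hsplit : (x * y * z) ^ (-(2*s/3)) = x ^ (-(2*s/3)) * (y ^ (-(2*s/3)) * z ^ (-(2*s/3))) := by
    rw [Real.mul_rpow (by positivity) hz.le, Real.mul_rpow hx.le hy.le, mul_assoc]
  have h12 : (12 * NN p) ^ (-s) = 12 ^ (-s) * NN p ^ (-s) := by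
    rw [Real.mul_rpow (by norm_num) hN.le]
  have h12' : (12:ℝ) ^ s * 12 ^ (-s) = 1 := by
    rw [← Real.rpow_add (by norm_num : (0:ℝ) < 12)]
    simp
  calc NN p ^ (-s) = 12 ^ s * ((12 * NN p) ^ (-s)) := by
        rw [h12, ← mul_assoc, h12', one_mul]
    _ ≤ 12 ^ s * ((x * y * z) ^ (-(2*s/3))) := by
        apply mul_le_mul_of_nonneg_left key (by positivity)
    _ = 12 ^ s * (x ^ (-(2*s/3)) * (y ^ (-(2*s/3)) * z ^ (-(2*s/3)))) := by rw [hsplit]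

lemma summable_NN {s : ℝ} (hs : 3/2 < s) :
    Summable (fun p : {p : ℤ × ℤ × ℤ // p ≠ 0} => NN p.1 ^ (-s)) := by
  have hb : 1 < 2*s/3 := by linarith
  set w : ℤ → ℝ := fun n => ((1 : ℝ) + |(n : ℝ)|) ^ (-(2*s/3)) with hw
  have hw0 : ∀ n, 0 ≤ w n := fun n => by positivity
  have hwsum : Summable w := summable_w hb
  have hinner : Summable (fun q : ℤ × ℤ => w q.1 * w q.2) :=
    hwsum.mul_of_nonneg hwsum hw0 hw0
  have houter : Summable (fun p : ℤ × ℤ × ℤ => w p.1 * (w p.2.1 * w p.2.2)) :=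
    hwsum.mul_of_nonneg hinner hw0 (fun q => mul_nonneg (hw0 _) (hw0 _))
  have hfull : Summable (fun p : ℤ × ℤ × ℤ => (12:ℝ) ^ s * (w p.1 * (w p.2.1 * w p.2.2))) :=
    houter.mul_left _
  have hsub : Summable (fun p : {p : ℤ × ℤ × ℤ // p ≠ 0} =>
      (12:ℝ) ^ s * (w p.1.1 * (w p.1.2.1 * w p.1.2.2))) :=
    hfull.comp_injective Subtype.coe_injective
  refine Summable.of_nonneg_of_le (fun p => Real.rpow_nonneg (NN_nonneg _) _) (fun p => ?_) hsub
  exact NN_rpow_le p.2 hs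

lemma hasDerivAt_cuboidalG (p : ℤ × ℤ × ℤ) {A : ℝ} (hA : -1 < A) :
    HasDerivAt (fun A => cuboidalG A p) (dd p / (A + 1) ^ 2) A := by
  have h : A + 1 ≠ 0 := by linarith
  have h1 : HasDerivAt (fun A : ℝ =>
      A * ((p.1 : ℝ) + (p.2.1 : ℝ))^2 + ((p.2.1 : ℝ) + (p.2.2 : ℝ))^2 +
      ((p.1 : ℝ) + (p.2.2 : ℝ))^2) (((p.1 : ℝ) + (p.2.1 : ℝ))^2) A := by
    simpa using (((hasDerivAt_id A).mul_const (((p.1 : ℝ) + (p.2.1 : ℝ))^2)).add_const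
      (((p.2.1 : ℝ) + (p.2.2 : ℝ))^2)).add_const (((p.1 : ℝ) + (p.2.2 : ℝ))^2)
  have h2 : HasDerivAt (fun A : ℝ => A + 1) 1 A := (hasDerivAt_id A).add_const 1
  have h3 := h1.div h2 h
  refine h3.congr_deriv ?_
  unfold dd
  field_simp
  ring

lemma hasDerivAt_f {p : ℤ × ℤ × ℤ} (hp : p ≠ 0) (s : ℝ) {A : ℝ}
    (hA : A ∈ Set.Ioo (1/4 : ℝ) (3/4)) :
    HasDerivAt (fun A => cuboidalG A p ^ (-s)) (FF1 s p A) A := by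
  have hg := hasDerivAt_cuboidalG p (by linarith [hA.1] : (-1:ℝ) < A)
  have hpos := cuboidalG_pos hp hA
  have h := hg.rpow_const (p := -s) (Or.inl hpos.ne')
  convert h using 1
  unfold FF1
  ring

lemma hasDerivAt_FF1 {p : ℤ × ℤ × ℤ} (hp : p ≠ 0) (s : ℝ) {A : ℝ}
    (hA : A ∈ Set.Ioo (1/4 : ℝ) (3/4)) :
    HasDerivAt (fun A => FF1 s p A) (FF2 s p A) A := by
  have hA1 : (0:ℝ) < A + 1 := by linarith [hA.1]
  have hg := hasDerivAt_cuboidalG p (by linarith [hA.1] : (-1:ℝ) < A)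
  have hpos := cuboidalG_pos hp hA
  have h1 := hg.rpow_const (p := -s - 1) (Or.inl hpos.ne')
  have h2 : HasDerivAt (fun A : ℝ => (A + 1) ^ 2) (2 * (A + 1)) A := by
    exact (((hasDerivAt_id A).add_const 1).pow 2).congr_deriv (by simp)
  have h3 := h1.div h2 (pow_ne_zero 2 hA1.ne')
  have h4 := h3.const_mul (-s * dd p)
  have heq : (fun A => FF1 s p A) =
      fun A => -s * dd p * (cuboidalG A p ^ (-s - 1) / (A + 1) ^ 2) := by
    funext B
    unfold FF1
    ring
  rw [heq]
  refine h4.congr_deriv ?_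
  unfold FF2
  rw [show -s - 1 - 1 = -s - 2 by ring]
  field_simp
  ring

lemma FF1_bound {p : ℤ × ℤ × ℤ} (hp : p ≠ 0) {s : ℝ} (hs : 3/2 < s) {A : ℝ}
    (hA : A ∈ Set.Ioo (1/4 : ℝ) (3/4)) :
    ‖FF1 s p A‖ ≤ 4 * s * 7 ^ (s + 1) * NN p ^ (-s) := by
  have hs0 : (0:ℝ) < s := by linarith
  have hN : (0:ℝ) < NN p := lt_of_lt_of_le one_pos (NN_ge_one hp)
  have hA1 : (1:ℝ) ≤ (A + 1) ^ 2 := by nlinarith [hA.1]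
  have hg1 : cuboidalG A p ^ (-(s+1)) ≤ 7 ^ (s+1) * NN p ^ (-(s+1)) :=
    cuboidalG_rpow_le hp hA (by linarith)
  rw [show -(s+1) = -s - 1 by ring] at hg1
  have hgn : (0:ℝ) ≤ cuboidalG A p ^ (-s - 1) := Real.rpow_nonneg (cuboidalG_pos hp hA).le _
  have hNNs : NN p * NN p ^ (-s - 1) = NN p ^ (-s) := by
    nth_rewrite 1 [← Real.rpow_one (NN p)]
    rw [← Real.rpow_add hN]
    norm_num
  rw [Real.norm_eq_abs]
  unfold FF1
  rw [abs_div, abs_mul, abs_mul, abs_neg, abs_of_pos hs0, abs_of_nonneg hgn,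
    abs_of_pos (by positivity : (0:ℝ) < (A+1)^2)]
  calc s * |dd p| * cuboidalG A p ^ (-s - 1) / (A + 1) ^ 2
      ≤ s * |dd p| * cuboidalG A p ^ (-s - 1) / 1 := by
        exact div_le_div_of_nonneg_left
          (mul_nonneg (mul_nonneg hs0.le (abs_nonneg _)) hgn) one_pos hA1
    _ = s * |dd p| * cuboidalG A p ^ (-s - 1) := by ring
    _ ≤ s * (4 * NN p) * (7 ^ (s+1) * NN p ^ (-s - 1)) := by
        apply mul_le_mul
        · exact mul_le_mul_of_nonneg_left (dd_abs_le p) hs0.le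
        · exact hg1
        · exact hgn
        · positivity
    _ = 4 * s * 7 ^ (s+1) * (NN p * NN p ^ (-s - 1)) := by ring
    _ = 4 * s * 7 ^ (s+1) * NN p ^ (-s) := by rw [hNNs]

lemma FF2_bound {p : ℤ × ℤ × ℤ} (hp : p ≠ 0) {s : ℝ} (hs : 3/2 < s) {A : ℝ}
    (hA : A ∈ Set.Ioo (1/4 : ℝ) (3/4)) :
    ‖FF2 s p A‖ ≤ (16 * s * (s+1) * 7 ^ (s+2) + 8 * s * 7 ^ (s+1)) * NN p ^ (-s) := by
  have hs0 : (0:ℝ) < s := by linarith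
  have hN : (0:ℝ) < NN p := lt_of_lt_of_le one_pos (NN_ge_one hp)
  have hA1' : (1:ℝ) ≤ A + 1 := by linarith [hA.1]
  have hA4 : (1:ℝ) ≤ (A + 1) ^ 4 := by
    calc (1:ℝ) = 1 ^ 4 := by norm_num
      _ ≤ (A + 1) ^ 4 := pow_le_pow_left₀ (by norm_num) hA1' 4
  have hA3 : (1:ℝ) ≤ (A + 1) ^ 3 := by
    calc (1:ℝ) = 1 ^ 3 := by norm_num
      _ ≤ (A + 1) ^ 3 := pow_le_pow_left₀ (by norm_num) hA1' 3
  have hg1 : cuboidalG A p ^ (-(s+1)) ≤ 7 ^ (s+1) * NN p ^ (-(s+1)) :=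
    cuboidalG_rpow_le hp hA (by linarith)
  have hg2 : cuboidalG A p ^ (-(s+2)) ≤ 7 ^ (s+2) * NN p ^ (-(s+2)) :=
    cuboidalG_rpow_le hp hA (by linarith)
  rw [show -(s+1) = -s - 1 by ring] at hg1
  rw [show -(s+2) = -s - 2 by ring] at hg2
  have hgn1 : (0:ℝ) ≤ cuboidalG A p ^ (-s - 1) := Real.rpow_nonneg (cuboidalG_pos hp hA).le _
  have hgn2 : (0:ℝ) ≤ cuboidalG A p ^ (-s - 2) := Real.rpow_nonneg (cuboidalG_pos hp hA).le _
  have hNN1 : NN p * NN p ^ (-s - 1) = NN p ^ (-s) := by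
    nth_rewrite 1 [← Real.rpow_one (NN p)]
    rw [← Real.rpow_add hN]
    norm_num
  have hNN2 : NN p ^ (2:ℕ) * NN p ^ (-s - 2) = NN p ^ (-s) := by
    nth_rewrite 1 [← Real.rpow_natCast (NN p) 2]
    rw [← Real.rpow_add hN]
    norm_num
  have hdd2 : dd p ^ 2 ≤ (4 * NN p) ^ 2 := by
    calc dd p ^ 2 = |dd p| ^ 2 := (sq_abs _).symm
      _ ≤ (4 * NN p) ^ 2 := by
          apply pow_le_pow_left₀ (abs_nonneg _) (dd_abs_le p)
  have h1 : |s * (s+1) * dd p ^ 2 * cuboidalG A p ^ (-s - 2) / (A + 1) ^ 4|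
      ≤ 16 * s * (s+1) * 7 ^ (s+2) * NN p ^ (-s) := by
    rw [abs_div, abs_of_pos (by positivity : (0:ℝ) < (A+1)^4), abs_mul, abs_mul, abs_mul,
      abs_of_pos hs0, abs_of_pos (by linarith : (0:ℝ) < s + 1), abs_of_nonneg (sq_nonneg _),
      abs_of_nonneg hgn2]
    calc s * (s+1) * dd p ^ 2 * cuboidalG A p ^ (-s - 2) / (A + 1) ^ 4
        ≤ s * (s+1) * dd p ^ 2 * cuboidalG A p ^ (-s - 2) / 1 := by
          exact div_le_div_of_nonneg_left
            (by positivity) one_pos hA4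
      _ = s * (s+1) * dd p ^ 2 * cuboidalG A p ^ (-s - 2) := by ring
      _ ≤ s * (s+1) * (4 * NN p) ^ 2 * (7 ^ (s+2) * NN p ^ (-s - 2)) := by
          apply mul_le_mul
          · exact mul_le_mul_of_nonneg_left hdd2 (by positivity)
          · exact hg2
          · exact hgn2
          · positivity
      _ = 16 * s * (s+1) * 7 ^ (s+2) * (NN p ^ (2:ℕ) * NN p ^ (-s - 2)) := by ring
      _ = 16 * s * (s+1) * 7 ^ (s+2) * NN p ^ (-s) := by rw [hNN2]
  have h2 : |2 * s * dd p * cuboidalG A p ^ (-s - 1) / (A + 1) ^ 3|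
      ≤ 8 * s * 7 ^ (s+1) * NN p ^ (-s) := by
    rw [abs_div, abs_of_pos (by positivity : (0:ℝ) < (A+1)^3), abs_mul, abs_mul,
      abs_of_pos (by linarith : (0:ℝ) < 2 * s), abs_of_nonneg hgn1]
    calc 2 * s * |dd p| * cuboidalG A p ^ (-s - 1) / (A + 1) ^ 3
        ≤ 2 * s * |dd p| * cuboidalG A p ^ (-s - 1) / 1 := by
          exact div_le_div_of_nonneg_left
            (mul_nonneg (mul_nonneg (by positivity) (abs_nonneg _)) hgn1) one_pos hA3
      _ = 2 * s * |dd p| * cuboidalG A p ^ (-s - 1) := by ring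
      _ ≤ 2 * s * (4 * NN p) * (7 ^ (s+1) * NN p ^ (-s - 1)) := by
          apply mul_le_mul
          · exact mul_le_mul_of_nonneg_left (dd_abs_le p) (by positivity)
          · exact hg1
          · exact hgn1
          · positivity
      _ = 8 * s * 7 ^ (s+1) * (NN p * NN p ^ (-s - 1)) := by ring
      _ = 8 * s * 7 ^ (s+1) * NN p ^ (-s) := by rw [hNN1]
  calc ‖FF2 s p A‖ ≤ |s * (s+1) * dd p ^ 2 * cuboidalG A p ^ (-s - 2) / (A + 1) ^ 4| +
        |2 * s * dd p * cuboidalG A p ^ (-s - 1) / (A + 1) ^ 3| := by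
        rw [Real.norm_eq_abs]; exact abs_add_le _ _
    _ ≤ 16 * s * (s+1) * 7 ^ (s+2) * NN p ^ (-s) + 8 * s * 7 ^ (s+1) * NN p ^ (-s) :=
        add_le_add h1 h2
    _ = (16 * s * (s+1) * 7 ^ (s+2) + 8 * s * 7 ^ (s+1)) * NN p ^ (-s) := by ring

lemma f_bound {p : ℤ × ℤ × ℤ} (hp : p ≠ 0) {s : ℝ} (hs : 3/2 < s) {A : ℝ}
    (hA : A ∈ Set.Ioo (1/4 : ℝ) (3/4)) :
    ‖cuboidalG A p ^ (-s)‖ ≤ 7 ^ s * NN p ^ (-s) := by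
  rw [Real.norm_eq_abs, abs_of_nonneg (Real.rpow_nonneg (cuboidalG_pos hp hA).le _)]
  exact cuboidalG_rpow_le hp hA (by linarith)

/-- The order-3 symmetry as an equivalence. -/
def sigmaE : (ℤ × ℤ × ℤ) ≃ (ℤ × ℤ × ℤ) where
  toFun := sigma3
  invFun := fun p => (p.2.2, p.1 + p.2.1 + p.2.2, -p.1 - p.2.2)
  left_inv := by rintro ⟨i, j, k⟩; simp [sigma3, Prod.ext_iff] <;> omega
  right_inv := by rintro ⟨i, j, k⟩; simp [sigma3, Prod.ext_iff] <;> omega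

lemma sigma3_ne_zero {p : ℤ × ℤ × ℤ} (hp : p ≠ 0) : sigma3 p ≠ 0 := by
  intro h
  apply hp
  obtain ⟨i, j, k⟩ := p
  simp only [sigma3, Prod.ext_iff, Prod.fst_zero, Prod.snd_zero] at h ⊢
  omega

/-- The induced equivalence on nonzero triples. -/
def eE : {p : ℤ × ℤ × ℤ // p ≠ 0} ≃ {p : ℤ × ℤ × ℤ // p ≠ 0} :=
  sigmaE.subtypeEquiv (fun a => by
    constructor
    · intro ha
      exact sigma3_ne_zero ha
    · intro ha ha0
      apply ha
      rw [ha0]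
      rfl)

lemma eE_coe (x : {p : ℤ × ℤ × ℤ // p ≠ 0}) : (eE x).1 = sigma3 x.1 := rfl

lemma cuboidalG_sigma3 (p : ℤ × ℤ × ℤ) :
    cuboidalG (1/2) (sigma3 p) = cuboidalG (1/2) p := by
  obtain ⟨i, j, k⟩ := p
  simp only [cuboidalG, sigma3]
  push_cast
  ring

lemma dd_sigma3_sum (p : ℤ × ℤ × ℤ) :
    dd p + dd (sigma3 p) + dd (sigma3 (sigma3 p)) = 0 := by
  obtain ⟨i, j, k⟩ := p
  simp only [dd, sigma3]
  push_cast
  ring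

lemma FF2_triple_eq (p : ℤ × ℤ × ℤ) (s : ℝ) :
    FF2 s p (1/2) + FF2 s (sigma3 p) (1/2) + FF2 s (sigma3 (sigma3 p)) (1/2)
      = s * (s+1) * cuboidalG (1/2) p ^ (-s - 2) *
        (dd p ^ 2 + dd (sigma3 p) ^ 2 + (dd p + dd (sigma3 p)) ^ 2) * (16/81) := by
  have hq1 := cuboidalG_sigma3 p
  have hq2 : cuboidalG (1/2) (sigma3 (sigma3 p)) = cuboidalG (1/2) p :=
    (cuboidalG_sigma3 _).trans hq1
  have hd : dd (sigma3 (sigma3 p)) = -dd p - dd (sigma3 p) := by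
    linarith [dd_sigma3_sum p]
  unfold FF2
  rw [hq1, hq2, hd]
  ring

lemma FF2_triple_nonneg {p : ℤ × ℤ × ℤ} (hp : p ≠ 0) {s : ℝ} (hs : 3/2 < s) :
    0 ≤ FF2 s p (1/2) + FF2 s (sigma3 p) (1/2) + FF2 s (sigma3 (sigma3 p)) (1/2) := by
  rw [FF2_triple_eq]
  have hhalf : (1/2 : ℝ) ∈ Set.Ioo (1/4 : ℝ) (3/4) := by constructor <;> norm_num
  have hX : (0:ℝ) ≤ cuboidalG (1/2) p ^ (-s - 2) :=
    Real.rpow_nonneg (cuboidalG_pos hp hhalf).le _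
  have hs0 : (0:ℝ) ≤ s := by linarith
  apply mul_nonneg _ (by norm_num)
  apply mul_nonneg (mul_nonneg (mul_nonneg hs0 (by linarith)) hX)
  positivity

lemma FF2_triple_pos {s : ℝ} (hs : 3/2 < s) :
    0 < FF2 s ((0:ℤ), (0:ℤ), (1:ℤ)) (1/2) + FF2 s (sigma3 ((0:ℤ), (0:ℤ), (1:ℤ))) (1/2) +
      FF2 s (sigma3 (sigma3 ((0:ℤ), (0:ℤ), (1:ℤ)))) (1/2) := by
  rw [FF2_triple_eq]
  have hs0 : (0:ℝ) < s := by linarith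
  have hG : cuboidalG (1/2) ((0:ℤ), (0:ℤ), (1:ℤ)) = 4/3 := by
    norm_num [cuboidalG]
  have hX : (0:ℝ) < cuboidalG (1/2) ((0:ℤ), (0:ℤ), (1:ℤ)) ^ (-s - 2) := by
    rw [hG]
    exact Real.rpow_pos_of_pos (by norm_num) _
  have hdd : dd ((0:ℤ), (0:ℤ), (1:ℤ)) ^ 2 + dd (sigma3 ((0:ℤ), (0:ℤ), (1:ℤ))) ^ 2 +
      (dd ((0:ℤ), (0:ℤ), (1:ℤ)) + dd (sigma3 ((0:ℤ), (0:ℤ), (1:ℤ)))) ^ 2 = 24 := by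
    norm_num [dd, sigma3]
  rw [hdd]
  nlinarith [mul_pos (mul_pos hs0 (by linarith : (0:ℝ) < s + 1)) hX]

end EpsteinAux

set_option maxHeartbeats 2000000 in
theorem epsteinL_second_deriv_at_half_pos (s : ℝ) (hs : s > 3/2) :
    0 < deriv (deriv (fun A : ℝ => epsteinL A s)) (1/2) := by
  classical
  open EpsteinAux in
  have hs' : 3/2 < s := hs
  have hhalf : (1/2 : ℝ) ∈ Set.Ioo (1/4 : ℝ) (3/4) := by constructor <;> norm_num
  have hsum0 : Summable (fun x : {p : ℤ × ℤ × ℤ // p ≠ 0} => (7:ℝ) ^ s * NN x.1 ^ (-s)) :=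
    (summable_NN hs').mul_left _
  have hsum1 : Summable (fun x : {p : ℤ × ℤ × ℤ // p ≠ 0} =>
      4 * s * 7 ^ (s+1) * NN x.1 ^ (-s)) := by
    have := (summable_NN hs').mul_left (4 * s * 7 ^ (s+1))
    simpa [mul_assoc] using this
  have hsum2 : Summable (fun x : {p : ℤ × ℤ × ℤ // p ≠ 0} =>
      (16 * s * (s+1) * 7 ^ (s+2) + 8 * s * 7 ^ (s+1)) * NN x.1 ^ (-s)) :=
    (summable_NN hs').mul_left _
  have hf0 : Summable (fun x : {p : ℤ × ℤ × ℤ // p ≠ 0} => cuboidalG (1/2) x.1 ^ (-s)) :=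
    Summable.of_norm_bounded hsum0 (fun x => f_bound x.2 hs' hhalf)
  have hFF1half : Summable (fun x : {p : ℤ × ℤ × ℤ // p ≠ 0} => FF1 s x.1 (1/2)) :=
    Summable.of_norm_bounded hsum1 (fun x => FF1_bound x.2 hs' hhalf)
  have key1 : ∀ B ∈ Set.Ioo (1/4 : ℝ) (3/4), HasDerivAt (fun A : ℝ => epsteinL A s)
      (∑' x : {p : ℤ × ℤ × ℤ // p ≠ 0}, FF1 s x.1 B) B := by
    intro B hB
    have := hasDerivAt_tsum_of_isPreconnected
      (g := fun (x : {p : ℤ × ℤ × ℤ // p ≠ 0}) (A : ℝ) => cuboidalG A x.1 ^ (-s))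
      (g' := fun x A => FF1 s x.1 A)
      (u := fun x => 4 * s * 7 ^ (s+1) * NN x.1 ^ (-s))
      (t := Set.Ioo (1/4 : ℝ) (3/4)) (y₀ := 1/2) (y := B)
      hsum1 isOpen_Ioo isPreconnected_Ioo
      (fun x A hA => hasDerivAt_f x.2 s hA)
      (fun x A hA => FF1_bound x.2 hs' hA) hhalf hf0 hB
    simpa only [epsteinL] using this
  have key2 : HasDerivAt (fun B : ℝ => ∑' x : {p : ℤ × ℤ × ℤ // p ≠ 0}, FF1 s x.1 B)
      (∑' x : {p : ℤ × ℤ × ℤ // p ≠ 0}, FF2 s x.1 (1/2)) (1/2) := by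
    exact hasDerivAt_tsum_of_isPreconnected
      (g := fun (x : {p : ℤ × ℤ × ℤ // p ≠ 0}) (A : ℝ) => FF1 s x.1 A)
      (g' := fun x A => FF2 s x.1 A)
      (u := fun x => (16 * s * (s+1) * 7 ^ (s+2) + 8 * s * 7 ^ (s+1)) * NN x.1 ^ (-s))
      (t := Set.Ioo (1/4 : ℝ) (3/4)) (y₀ := 1/2) (y := 1/2)
      hsum2 isOpen_Ioo isPreconnected_Ioo
      (fun x A hA => hasDerivAt_FF1 x.2 s hA)
      (fun x A hA => FF2_bound x.2 hs' hA) hhalf hFF1half hhalf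
  have hev : deriv (fun A : ℝ => epsteinL A s) =ᶠ[nhds (1/2 : ℝ)]
      fun A : ℝ => ∑' x : {p : ℤ × ℤ × ℤ // p ≠ 0}, FF1 s x.1 A := by
    filter_upwards [isOpen_Ioo.mem_nhds hhalf] with A hA
    exact (key1 A hA).deriv
  have hD : deriv (deriv (fun A : ℝ => epsteinL A s)) (1/2)
      = ∑' x : {p : ℤ × ℤ × ℤ // p ≠ 0}, FF2 s x.1 (1/2) := by
    rw [Filter.EventuallyEq.deriv_eq hev, key2.deriv]
  rw [hD]
  -- positivity of the sum of second derivatives via the order-3 symmetry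
  set G : {p : ℤ × ℤ × ℤ // p ≠ 0} → ℝ := fun x => FF2 s x.1 (1/2) with hGdef
  have SummG : Summable G :=
    Summable.of_norm_bounded hsum2 (fun x => FF2_bound x.2 hs' hhalf)
  have SummGe : Summable (fun x => G (eE x)) := (eE.summable_iff (f := G)).mpr SummG
  have SummGee : Summable (fun x => G (eE (eE x))) := by
    have := ((eE.trans eE).summable_iff (f := G)).mpr SummG
    exact this
  have hshift1 : ∑' x, G (eE x) = ∑' x, G x := eE.tsum_eq G
  have hshift2 : ∑' x, G (eE (eE x)) = ∑' x, G x := by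
    have := (eE.trans eE).tsum_eq G
    simpa using this
  have hsum3 : ∑' x, (G x + G (eE x) + G (eE (eE x))) = 3 * ∑' x, G x := by
    rw [Summable.tsum_add (SummG.add SummGe) SummGee, Summable.tsum_add SummG SummGe, hshift1, hshift2]
    ring
  have hpos3 : 0 < ∑' x, (G x + G (eE x) + G (eE (eE x))) := by
    refine Summable.tsum_pos ((SummG.add SummGe).add SummGee) (fun x => ?_)
      ⟨((0:ℤ), (0:ℤ), (1:ℤ)), by simp⟩ ?_
    · exact FF2_triple_nonneg x.2 hs'
    · exact FF2_triple_pos hs'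
  linarith [hsum3 ▸ hpos3]
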